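/- arXiv:2507.00146 — 2 statements merged into one kernel-verified Lean document; each statement's English description precedes it below -/
import Mathlib

section
/- In a weak model category, the homotopy relation on morphisms from a cofibrant object A to a fibrant object X, defined via any cylinder for A, is an equivalence relation. -/
open CategoryTheory Limits

universe v u

variable (C : Type u) [Category.{v} C] [HasFiniteLimits C] [HasFiniteColimits C]

/-- A weak model structure in the sense of Henry: classes of cofibrations and fibrations
(cofibrations have cofibrant domains, fibrations have fibrant codomains; each class
contains isomorphisms between cofibrant resp. fibrant objects, is closed under
composition, and is stable under pushout resp. pullback), together with the
factorisation axiom, the relative strong cylinder axiom, and the relative strong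
path object axiom.  Acyclic (co)fibrations are the (co)fibrations with the
(left/right) lifting property against all (fibrations/cofibrations). -/
structure WeakModelStructure where
  Cof : MorphismProperty C
  Fib : MorphismProperty C
  cof_bot : Cof (initial.to (⊥_ C))
  cof_dom : ∀ {A B : C} (i : A ⟶ B), Cof i → Cof (initial.to A)
  cof_iso : ∀ {A B : C} (e : A ⟶ B), IsIso e → Cof (initial.to A) → Cof e
  cof_comp : ∀ {A B D : C} (i : A ⟶ B) (j : B ⟶ D), Cof i → Cof j → Cof (i ≫ j)
  cof_pushout : ∀ {A B D : C} (i : A ⟶ B) (f : A ⟶ D), Cof i → Cof (initial.to D) →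
    Cof (pushout.inr i f)
  fib_top : Fib (terminal.from (⊤_ C))
  fib_cod : ∀ {X Y : C} (p : X ⟶ Y), Fib p → Fib (terminal.from Y)
  fib_iso : ∀ {X Y : C} (e : X ⟶ Y), IsIso e → Fib (terminal.from Y) → Fib e
  fib_comp : ∀ {X Y Z : C} (p : X ⟶ Y) (q : Y ⟶ Z), Fib p → Fib q → Fib (p ≫ q)
  fib_pullback : ∀ {X Y Z : C} (p : X ⟶ Y) (f : Z ⟶ Y), Fib p → Fib (terminal.from Z) →
    Fib (pullback.fst f p)
  /-- any morphism from a cofibrant object to a fibrant object factors as a cofibration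
  followed by an acyclic fibration -/
  fact₁ : ∀ {A X : C} (f : A ⟶ X), Cof (initial.to A) → Fib (terminal.from X) →
    ∃ (Z : C) (i : A ⟶ Z) (p : Z ⟶ X), Cof i ∧
      (Fib p ∧ ∀ ⦃A' B' : C⦄ (j : A' ⟶ B'), Cof j → HasLiftingProperty j p) ∧
      i ≫ p = f
  /-- any morphism from a cofibrant object to a fibrant object factors as an acyclic
  cofibration followed by a fibration -/
  fact₂ : ∀ {A X : C} (f : A ⟶ X), Cof (initial.to A) → Fib (terminal.from X) →
    ∃ (Z : C) (i : A ⟶ Z) (p : Z ⟶ X),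
      (Cof i ∧ ∀ ⦃X' Y' : C⦄ (q : X' ⟶ Y'), Fib q → HasLiftingProperty i q) ∧
      Fib p ∧ i ≫ p = f
  /-- every cofibration with fibrant codomain admits a relative strong cylinder -/
  cylinder_axiom : ∀ {A B : C} (j : A ⟶ B), Cof j → Fib (terminal.from B) →
    ∃ (I : C) (lneg lpos : B ⟶ I) (σ : I ⟶ B) (h : j ≫ lneg = j ≫ lpos),
      Cof (pushout.desc lneg lpos h) ∧
      (Cof lneg ∧ ∀ ⦃X' Y' : C⦄ (q : X' ⟶ Y'), Fib q → HasLiftingProperty lneg q) ∧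
      lneg ≫ σ = 𝟙 B ∧ lpos ≫ σ = 𝟙 B
  /-- every fibration with cofibrant domain admits a relative strong path object -/
  path_axiom : ∀ {A X : C} (p : A ⟶ X), Fib p → Cof (initial.to A) →
    ∃ (P : C) (qneg qpos : P ⟶ A) (σ : A ⟶ P) (h : qneg ≫ p = qpos ≫ p),
      Fib (pullback.lift qneg qpos h) ∧
      (Fib qneg ∧ ∀ ⦃A' B' : C⦄ (i : A' ⟶ B'), Cof i → HasLiftingProperty i qneg) ∧
      σ ≫ qneg = 𝟙 A ∧ σ ≫ qpos = 𝟙 A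

variable {C}

/-- A cylinder for a cofibrant object `A`: a cofibration `(jneg, jpos) : A ⊔ A ↪ I` whose
first leg is an acyclic cofibration, such that the codiagonal factors through it up to
an acyclic cofibration `d : A ↪ D`. -/
def IsCylinder (W : WeakModelStructure C) (A I : C) (jneg jpos : A ⟶ I) : Prop :=
  W.Cof (coprod.desc jneg jpos) ∧
    (W.Cof jneg ∧ ∀ ⦃X' Y' : C⦄ (q : X' ⟶ Y'), W.Fib q → HasLiftingProperty jneg q) ∧
    ∃ (D : C) (d : A ⟶ D) (h : I ⟶ D),
      (W.Cof d ∧ ∀ ⦃X' Y' : C⦄ (q : X' ⟶ Y'), W.Fib q → HasLiftingProperty d q) ∧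
      jneg ≫ h = d ∧ jpos ≫ h = d

/-- The homotopy relation: `f ∼ g` when they extend along the two legs of some cylinder. -/
def Homotopic (W : WeakModelStructure C) {A X : C} (f g : A ⟶ X) : Prop :=
  ∃ (I : C) (jneg jpos : A ⟶ I), IsCylinder W A I jneg jpos ∧
    ∃ h : I ⟶ X, jneg ≫ h = f ∧ jpos ≫ h = g


namespace WeakModelStructure

variable (W : WeakModelStructure C)

/-- The codomain of a cofibration is cofibrant. -/
lemma aux_cof_cod {A B : C} (i : A ⟶ B) (hi : W.Cof i) : W.Cof (initial.to B) := by
  have h := W.cof_comp (initial.to A) i (W.cof_dom i hi) hi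
  rwa [initial.hom_ext (initial.to A ≫ i) (initial.to B)] at h

/-- Cofibrations are closed under postcomposition with isomorphisms. -/
lemma aux_cof_comp_iso {A B B' : C} (i : A ⟶ B) (e : B ⟶ B') [IsIso e] (hi : W.Cof i) :
    W.Cof (i ≫ e) :=
  W.cof_comp i e hi (W.cof_iso e inferInstance (W.aux_cof_cod i hi))

/-- Cofibrant objects are closed under isomorphisms. -/
lemma aux_cofibrant_iso {A A' : C} (e : A ⟶ A') [IsIso e] (hA : W.Cof (initial.to A)) :
    W.Cof (initial.to A') := by
  have h := W.cof_comp (initial.to A) e hA (W.cof_iso e inferInstance hA)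
  rwa [initial.hom_ext (initial.to A ≫ e) (initial.to A')] at h

/-- A binary coproduct of cofibrant objects is cofibrant. -/
lemma aux_cofibrant_coprod {B₁ B₂ : C} (h₁ : W.Cof (initial.to B₁))
    (h₂ : W.Cof (initial.to B₂)) : W.Cof (initial.to (B₁ ⨿ B₂)) := by
  let φ : pushout (initial.to B₂) (initial.to B₁) ⟶ B₁ ⨿ B₂ :=
    pushout.desc coprod.inr coprod.inl (initial.hom_ext _ _)
  have hiso : IsIso φ := by
    refine ⟨coprod.desc (pushout.inr _ _) (pushout.inl _ _), ?_, ?_⟩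
    · apply pushout.hom_ext <;> simp [coprod.inl_desc, coprod.inr_desc, coprod.inl_desc_assoc, coprod.inr_desc_assoc, pushout.inl_desc, pushout.inr_desc, pushout.inl_desc_assoc, pushout.inr_desc_assoc, pullback.lift_fst, pullback.lift_snd, pullback.lift_fst_assoc, pullback.lift_snd_assoc, φ]
    · apply coprod.hom_ext <;> simp [coprod.inl_desc, coprod.inr_desc, coprod.inl_desc_assoc, coprod.inr_desc_assoc, pushout.inl_desc, pushout.inr_desc, pushout.inl_desc_assoc, pushout.inr_desc_assoc, pullback.lift_fst, pullback.lift_snd, pullback.lift_fst_assoc, pullback.lift_snd_assoc, φ]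
  have hP : W.Cof (initial.to (pushout (initial.to B₂) (initial.to B₁))) :=
    W.aux_cof_cod _ (W.cof_pushout (initial.to B₂) (initial.to B₁) h₂ h₁)
  exact W.aux_cofibrant_iso φ hP

/-- `i ⨿ 𝟙` is a cofibration when `i` is one and the other object is cofibrant. -/
lemma aux_cof_map_left {A Z T : C} (i : A ⟶ Z) (hi : W.Cof i) (hT : W.Cof (initial.to T)) :
    W.Cof (coprod.map i (𝟙 T)) := by
  let φ : pushout i (coprod.inl : A ⟶ A ⨿ T) ⟶ Z ⨿ T :=
    pushout.desc coprod.inl (coprod.map i (𝟙 T)) (by simp)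
  have hiso : IsIso φ := by
    refine ⟨coprod.desc (pushout.inl _ _) ((coprod.inr : T ⟶ A ⨿ T) ≫ pushout.inr i coprod.inl),
      ?_, ?_⟩
    · apply pushout.hom_ext
      · simp [coprod.inl_desc, coprod.inr_desc, coprod.inl_desc_assoc, coprod.inr_desc_assoc, pushout.inl_desc, pushout.inr_desc, pushout.inl_desc_assoc, pushout.inr_desc_assoc, pullback.lift_fst, pullback.lift_snd, pullback.lift_fst_assoc, pullback.lift_snd_assoc, φ]
      · apply coprod.hom_ext <;> simp [coprod.inl_desc, coprod.inr_desc, coprod.inl_desc_assoc, coprod.inr_desc_assoc, pushout.inl_desc, pushout.inr_desc, pushout.inl_desc_assoc, pushout.inr_desc_assoc, pullback.lift_fst, pullback.lift_snd, pullback.lift_fst_assoc, pullback.lift_snd_assoc, φ, pushout.condition]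
    · apply coprod.hom_ext <;> simp [coprod.inl_desc, coprod.inr_desc, coprod.inl_desc_assoc, coprod.inr_desc_assoc, pushout.inl_desc, pushout.inr_desc, pushout.inl_desc_assoc, pushout.inr_desc_assoc, pullback.lift_fst, pullback.lift_snd, pullback.lift_fst_assoc, pullback.lift_snd_assoc, φ]
  have h1 : W.Cof (pushout.inr i (coprod.inl : A ⟶ A ⨿ T)) :=
    W.cof_pushout i coprod.inl hi (W.aux_cofibrant_coprod (W.cof_dom i hi) hT)
  have h2 : W.Cof (pushout.inr i (coprod.inl : A ⟶ A ⨿ T) ≫ φ) := W.aux_cof_comp_iso _ φ h1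
  rwa [show pushout.inr i (coprod.inl : A ⟶ A ⨿ T) ≫ φ = coprod.map i (𝟙 T) by simp [coprod.inl_desc, coprod.inr_desc, coprod.inl_desc_assoc, coprod.inr_desc_assoc, pushout.inl_desc, pushout.inr_desc, pushout.inl_desc_assoc, pushout.inr_desc_assoc, pullback.lift_fst, pullback.lift_snd, pullback.lift_fst_assoc, pullback.lift_snd_assoc, φ]] at h2

/-- `𝟙 ⨿ i` is a cofibration when `i` is one and the other object is cofibrant. -/
lemma aux_cof_map_right {A Z T : C} (i : A ⟶ Z) (hi : W.Cof i) (hT : W.Cof (initial.to T)) :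
    W.Cof (coprod.map (𝟙 T) i) := by
  let φ : pushout i (coprod.inr : A ⟶ T ⨿ A) ⟶ T ⨿ Z :=
    pushout.desc coprod.inr (coprod.map (𝟙 T) i) (by simp)
  have hiso : IsIso φ := by
    refine ⟨coprod.desc ((coprod.inl : T ⟶ T ⨿ A) ≫ pushout.inr i coprod.inr) (pushout.inl _ _),
      ?_, ?_⟩
    · apply pushout.hom_ext
      · simp [coprod.inl_desc, coprod.inr_desc, coprod.inl_desc_assoc, coprod.inr_desc_assoc, pushout.inl_desc, pushout.inr_desc, pushout.inl_desc_assoc, pushout.inr_desc_assoc, pullback.lift_fst, pullback.lift_snd, pullback.lift_fst_assoc, pullback.lift_snd_assoc, φ]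
      · apply coprod.hom_ext <;> simp [coprod.inl_desc, coprod.inr_desc, coprod.inl_desc_assoc, coprod.inr_desc_assoc, pushout.inl_desc, pushout.inr_desc, pushout.inl_desc_assoc, pushout.inr_desc_assoc, pullback.lift_fst, pullback.lift_snd, pullback.lift_fst_assoc, pullback.lift_snd_assoc, φ, pushout.condition]
    · apply coprod.hom_ext <;> simp [coprod.inl_desc, coprod.inr_desc, coprod.inl_desc_assoc, coprod.inr_desc_assoc, pushout.inl_desc, pushout.inr_desc, pushout.inl_desc_assoc, pushout.inr_desc_assoc, pullback.lift_fst, pullback.lift_snd, pullback.lift_fst_assoc, pullback.lift_snd_assoc, φ]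
  have h1 : W.Cof (pushout.inr i (coprod.inr : A ⟶ T ⨿ A)) :=
    W.cof_pushout i coprod.inr hi (W.aux_cofibrant_coprod hT (W.cof_dom i hi))
  have h2 : W.Cof (pushout.inr i (coprod.inr : A ⟶ T ⨿ A) ≫ φ) := W.aux_cof_comp_iso _ φ h1
  rwa [show pushout.inr i (coprod.inr : A ⟶ T ⨿ A) ≫ φ = coprod.map (𝟙 T) i by simp [coprod.inl_desc, coprod.inr_desc, coprod.inl_desc_assoc, coprod.inr_desc_assoc, pushout.inl_desc, pushout.inr_desc, pushout.inl_desc_assoc, pushout.inr_desc_assoc, pullback.lift_fst, pullback.lift_snd, pullback.lift_fst_assoc, pullback.lift_snd_assoc, φ]] at h2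

/-- `i ⨿ i` is a cofibration when `i` is one. -/
lemma aux_cof_map {A Z : C} (i : A ⟶ Z) (hi : W.Cof i) : W.Cof (coprod.map i i) := by
  have h := W.cof_comp _ _ (W.aux_cof_map_left i hi (W.cof_dom i hi))
    (W.aux_cof_map_right i hi (W.aux_cof_cod i hi))
  rwa [show coprod.map i (𝟙 A) ≫ coprod.map (𝟙 Z) i = coprod.map i i by
    apply coprod.hom_ext <;> simp] at h

/-- Extend a map into a fibrant object along a map with the left lifting property
against fibrations. -/
lemma aux_ext {A B T : C} (j : A ⟶ B)
    (hj : ∀ ⦃X' Y' : C⦄ (q : X' ⟶ Y'), W.Fib q → HasLiftingProperty j q)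
    (hT : W.Fib (terminal.from T)) (u : A ⟶ T) : ∃ e : B ⟶ T, j ≫ e = u := by
  haveI := hj _ hT
  have sq : CommSq u j (terminal.from T) (terminal.from B) := ⟨terminal.hom_ext _ _⟩
  exact ⟨sq.lift, sq.fac_left⟩

/-- Lift a map from a cofibrant object along a map with the right lifting property
against cofibrations. -/
lemma aux_lift {A X' X : C} (ρ : X' ⟶ X)
    (hρ : ∀ ⦃A' B' : C⦄ (j : A' ⟶ B'), W.Cof j → HasLiftingProperty j ρ)
    (hA : W.Cof (initial.to A)) (f : A ⟶ X) : ∃ f' : A ⟶ X', f' ≫ ρ = f := by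
  haveI := hρ _ hA
  have sq : CommSq (initial.to X') (initial.to A) ρ f := ⟨initial.hom_ext _ _⟩
  exact ⟨sq.lift, sq.fac_right⟩

end WeakModelStructure

/-- in a weak model category, the homotopy relation on morphisms from a
cofibrant object `A` to a fibrant object `X` is an equivalence relation. -/
theorem stmt6 (W : WeakModelStructure C) {A X : C}
    (hA : W.Cof (initial.to A)) (hX : W.Fib (terminal.from X)) :
    Equivalence (fun f g : A ⟶ X => Homotopic W f g) := by
  classical
  -- fibrant replacement `i : A ⟶ Z` of `A` (an acyclic cofibration with `Z` bifibrant)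
  obtain ⟨Z, i, pZ, ⟨hicof, hillp⟩, hpZ, -⟩ := W.fact₂ (terminal.from A) hA W.fib_top
  have hZfib : W.Fib (terminal.from Z) := by
    rwa [terminal.hom_ext (terminal.from Z) pZ]
  have hZcof : W.Cof (initial.to Z) := W.aux_cof_cod i hicof
  -- a strong cylinder for `Z`
  obtain ⟨IZ, ln, lp, σ, hσw, hdesccof, ⟨hlncof, hlnllp⟩, hlnσ, hlpσ⟩ :=
    W.cylinder_axiom (initial.to Z) hZcof hZfib
  -- the induced cylinder for `A`
  set kn : A ⟶ IZ := i ≫ ln with hkn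
  set kp : A ⟶ IZ := i ≫ lp with hkp
  have hkncof : W.Cof kn := W.cof_comp i ln hicof hlncof
  have hknllp : ∀ ⦃X' Y' : C⦄ (q : X' ⟶ Y'), W.Fib q → HasLiftingProperty kn q := by
    intro X' Y' q hq
    haveI := hillp q hq
    haveI := hlnllp q hq
    infer_instance
  have hknσ : kn ≫ σ = i := by rw [hkn, Category.assoc, hlnσ, Category.comp_id]
  have hkpσ : kp ≫ σ = i := by rw [hkp, Category.assoc, hlpσ, Category.comp_id]
  have hbd : W.Cof (coprod.desc kn kp) := by
    let χ : (Z ⨿ Z) ⟶ pushout (initial.to Z) (initial.to Z) :=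
      coprod.desc (pushout.inl _ _) (pushout.inr _ _)
    have hχ : IsIso χ := by
      refine ⟨pushout.desc coprod.inl coprod.inr (initial.hom_ext _ _), ?_, ?_⟩
      · apply coprod.hom_ext <;> simp [coprod.inl_desc, coprod.inr_desc, coprod.inl_desc_assoc, coprod.inr_desc_assoc, pushout.inl_desc, pushout.inr_desc, pushout.inl_desc_assoc, pushout.inr_desc_assoc, pullback.lift_fst, pullback.lift_snd, pullback.lift_fst_assoc, pullback.lift_snd_assoc, χ]
      · apply pushout.hom_ext <;> simp [coprod.inl_desc, coprod.inr_desc, coprod.inl_desc_assoc, coprod.inr_desc_assoc, pushout.inl_desc, pushout.inr_desc, pushout.inl_desc_assoc, pushout.inr_desc_assoc, pullback.lift_fst, pullback.lift_snd, pullback.lift_fst_assoc, pullback.lift_snd_assoc, χ]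
    have h1 : W.Cof (χ ≫ pushout.desc ln lp hσw) := by
      haveI := hχ
      exact W.cof_comp χ _ (W.cof_iso χ hχ (W.aux_cofibrant_coprod hZcof hZcof)) hdesccof
    have h2 : W.Cof (coprod.map i i ≫ (χ ≫ pushout.desc ln lp hσw)) :=
      W.cof_comp _ _ (W.aux_cof_map i hicof) h1
    rwa [show coprod.map i i ≫ (χ ≫ pushout.desc ln lp hσw) = coprod.desc kn kp by
      apply coprod.hom_ext <;> simp [coprod.inl_desc, coprod.inr_desc, coprod.inl_desc_assoc, coprod.inr_desc_assoc, pushout.inl_desc, pushout.inr_desc, pushout.inl_desc_assoc, pushout.inr_desc_assoc, pullback.lift_fst, pullback.lift_snd, pullback.lift_fst_assoc, pullback.lift_snd_assoc, χ, hkn, hkp]] at h2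
  have hcyl : IsCylinder W A IZ kn kp :=
    ⟨hbd, ⟨hkncof, hknllp⟩, Z, i, σ, ⟨hicof, hillp⟩, hknσ, hkpσ⟩
  -- cofibrant replacement `ρ : X' ⟶ X` of `X` (an acyclic fibration with `X'` bifibrant)
  obtain ⟨X', i₀, ρ, hi₀cof, ⟨hρfib, hρrlp⟩, -⟩ := W.fact₁ (initial.to X) W.cof_bot hX
  have hX'cof : W.Cof (initial.to X') := by
    rwa [initial.hom_ext (initial.to X') i₀]
  have hX'fib : W.Fib (terminal.from X') := by
    have h := W.fib_comp ρ (terminal.from X) hρfib hX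
    rwa [terminal.hom_ext (ρ ≫ terminal.from X) (terminal.from X')] at h
  -- a strong path object for `X'`
  obtain ⟨P, qn, qp, s, hqw, hQfib, ⟨hqnfib, hqnrlp⟩, hsqn, hsqp⟩ :=
    W.path_axiom (terminal.from X') hX'fib hX'cof
  -- from a "right homotopy" in `X'` to a homotopy on the fixed cylinder, with values in `X'`
  have pathToCyl : ∀ (f' g' : A ⟶ X') (K : A ⟶ P), K ≫ qn = f' → K ≫ qp = g' →
      ∃ H : IZ ⟶ X', kn ≫ H = f' ∧ kp ≫ H = g' := by
    intro f' g' K hKn hKp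
    obtain ⟨F, hF⟩ := W.aux_ext i hillp hX'fib f'
    haveI := hqnrlp _ hbd
    have sq : CommSq (coprod.desc (f' ≫ s) K) (coprod.desc kn kp) qn (σ ≫ F) := by
      constructor
      apply coprod.hom_ext
      · simp [coprod.inl_desc, coprod.inr_desc, coprod.inl_desc_assoc, coprod.inr_desc_assoc, pushout.inl_desc, pushout.inr_desc, pushout.inl_desc_assoc, pushout.inr_desc_assoc, pullback.lift_fst, pullback.lift_snd, pullback.lift_fst_assoc, pullback.lift_snd_assoc, hsqn, reassoc_of% hknσ, hF]
      · simp [coprod.inl_desc, coprod.inr_desc, coprod.inl_desc_assoc, coprod.inr_desc_assoc, pushout.inl_desc, pushout.inr_desc, pushout.inl_desc_assoc, pushout.inr_desc_assoc, pullback.lift_fst, pullback.lift_snd, pullback.lift_fst_assoc, pullback.lift_snd_assoc, hKn, reassoc_of% hkpσ, hF]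
    refine ⟨sq.lift ≫ qp, ?_, ?_⟩
    · have h := coprod.inl ≫= sq.fac_left
      simp only [coprod.inl_desc_assoc, coprod.inl_desc] at h
      rw [reassoc_of% h, hsqp, Category.comp_id]
    · have h := coprod.inr ≫= sq.fac_left
      simp only [coprod.inr_desc_assoc, coprod.inr_desc] at h
      rw [reassoc_of% h, hKp]
  -- from a homotopy on an arbitrary cylinder, with values in `X'`, to "right homotopies"
  -- in both directions
  have cylToPath : ∀ (I1 : C) (jn jp : A ⟶ I1), IsCylinder W A I1 jn jp →
      ∀ (f' g' : A ⟶ X') (H : I1 ⟶ X'), jn ≫ H = f' → jp ≫ H = g' →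
      (∃ K : A ⟶ P, K ≫ qn = f' ∧ K ≫ qp = g') ∧
      (∃ K : A ⟶ P, K ≫ qn = g' ∧ K ≫ qp = f') := by
    rintro I1 jn jp ⟨hbd1, ⟨hjncof, hjnllp⟩, D1, d1, hbar, ⟨hd1cof, hd1llp⟩, hen, hep⟩
      f' g' H hHn hHp
    obtain ⟨e, he⟩ := W.aux_ext d1 hd1llp hX'fib f'
    have hjnk : jn ≫ (hbar ≫ e) = f' := by rw [← Category.assoc, hen, he]
    have hjpk : jp ≫ (hbar ≫ e) = f' := by rw [← Category.assoc, hep, he]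
    haveI := hjnllp _ hQfib
    constructor
    · have sq : CommSq (f' ≫ s) jn (pullback.lift qn qp hqw)
          (pullback.lift (hbar ≫ e) H (terminal.hom_ext _ _)) := by
        constructor
        apply pullback.hom_ext
        · simp [coprod.inl_desc, coprod.inr_desc, coprod.inl_desc_assoc, coprod.inr_desc_assoc, pushout.inl_desc, pushout.inr_desc, pushout.inl_desc_assoc, pushout.inr_desc_assoc, pullback.lift_fst, pullback.lift_snd, pullback.lift_fst_assoc, pullback.lift_snd_assoc, hsqn, hjnk]
        · simp [coprod.inl_desc, coprod.inr_desc, coprod.inl_desc_assoc, coprod.inr_desc_assoc, pushout.inl_desc, pushout.inr_desc, pushout.inl_desc_assoc, pushout.inr_desc_assoc, pullback.lift_fst, pullback.lift_snd, pullback.lift_fst_assoc, pullback.lift_snd_assoc, hsqp, hHn]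
      refine ⟨jp ≫ sq.lift, ?_, ?_⟩
      · have h := sq.fac_right =≫ pullback.fst (terminal.from X') (terminal.from X')
        simp only [Category.assoc, pullback.lift_fst] at h
        rw [Category.assoc, h, hjpk]
      · have h := sq.fac_right =≫ pullback.snd (terminal.from X') (terminal.from X')
        simp only [Category.assoc, pullback.lift_snd] at h
        rw [Category.assoc, h, hHp]
    · have sq : CommSq (f' ≫ s) jn (pullback.lift qn qp hqw)
          (pullback.lift H (hbar ≫ e) (terminal.hom_ext _ _)) := by
        constructor
        apply pullback.hom_ext
        · simp [coprod.inl_desc, coprod.inr_desc, coprod.inl_desc_assoc, coprod.inr_desc_assoc, pushout.inl_desc, pushout.inr_desc, pushout.inl_desc_assoc, pushout.inr_desc_assoc, pullback.lift_fst, pullback.lift_snd, pullback.lift_fst_assoc, pullback.lift_snd_assoc, hsqn, hHn]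
        · simp [coprod.inl_desc, coprod.inr_desc, coprod.inl_desc_assoc, coprod.inr_desc_assoc, pushout.inl_desc, pushout.inr_desc, pushout.inl_desc_assoc, pushout.inr_desc_assoc, pullback.lift_fst, pullback.lift_snd, pullback.lift_fst_assoc, pullback.lift_snd_assoc, hsqp, hjnk]
      refine ⟨jp ≫ sq.lift, ?_, ?_⟩
      · have h := sq.fac_right =≫ pullback.fst (terminal.from X') (terminal.from X')
        simp only [Category.assoc, pullback.lift_fst] at h
        rw [Category.assoc, h, hHp]
      · have h := sq.fac_right =≫ pullback.snd (terminal.from X') (terminal.from X')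
        simp only [Category.assoc, pullback.lift_snd] at h
        rw [Category.assoc, h, hjpk]
  -- from `Homotopic f g` to "right homotopies" between arbitrary chosen lifts
  have toRp : ∀ (f g : A ⟶ X) (f' g' : A ⟶ X'), f' ≫ ρ = f → g' ≫ ρ = g →
      Homotopic W f g →
      (∃ K : A ⟶ P, K ≫ qn = f' ∧ K ≫ qp = g') ∧
      (∃ K : A ⟶ P, K ≫ qn = g' ∧ K ≫ qp = f') := by
    rintro f g f' g' hf' hg' ⟨I1, jn, jp, hcyl1, H, hHn, hHp⟩
    haveI := hρrlp _ hcyl1.1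
    have sq : CommSq (coprod.desc f' g') (coprod.desc jn jp) ρ H := by
      constructor
      apply coprod.hom_ext <;> simp [hf', hg', hHn, hHp]
    have h1 : jn ≫ sq.lift = f' := by
      have h := coprod.inl ≫= sq.fac_left
      simp only [coprod.inl_desc_assoc, coprod.inl_desc] at h
      exact h
    have h2 : jp ≫ sq.lift = g' := by
      have h := coprod.inr ≫= sq.fac_left
      simp only [coprod.inr_desc_assoc, coprod.inr_desc] at h
      exact h
    exact cylToPath I1 jn jp hcyl1 f' g' sq.lift h1 h2
  -- from a "right homotopy" to `Homotopic`
  have fromRp : ∀ (f' g' : A ⟶ X') (K : A ⟶ P), K ≫ qn = f' → K ≫ qp = g' →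
      Homotopic W (f' ≫ ρ) (g' ≫ ρ) := by
    intro f' g' K hKn hKp
    obtain ⟨H, h1, h2⟩ := pathToCyl f' g' K hKn hKp
    exact ⟨IZ, kn, kp, hcyl, H ≫ ρ, by rw [reassoc_of% h1], by rw [reassoc_of% h2]⟩
  constructor
  · -- reflexivity
    intro f
    obtain ⟨f', hf'⟩ := W.aux_lift ρ hρrlp hA f
    have h := fromRp f' f' (f' ≫ s) (by rw [Category.assoc, hsqn, Category.comp_id])
      (by rw [Category.assoc, hsqp, Category.comp_id])
    rwa [hf'] at h
  · -- symmetry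
    intro f g hfg
    obtain ⟨f', hf'⟩ := W.aux_lift ρ hρrlp hA f
    obtain ⟨g', hg'⟩ := W.aux_lift ρ hρrlp hA g
    obtain ⟨-, K, h1, h2⟩ := toRp f g f' g' hf' hg' hfg
    have h := fromRp g' f' K h1 h2
    rwa [hf', hg'] at h
  · -- transitivity
    intro f g h hfg hgh
    obtain ⟨f', hf'⟩ := W.aux_lift ρ hρrlp hA f
    obtain ⟨g', hg'⟩ := W.aux_lift ρ hρrlp hA g
    obtain ⟨h', hh'⟩ := W.aux_lift ρ hρrlp hA h
    obtain ⟨⟨K1, hK1n, hK1p⟩, -⟩ := toRp f g f' g' hf' hg' hfg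
    obtain ⟨⟨K2, hK2n, hK2p⟩, -⟩ := toRp g h g' h' hg' hh' hgh
    obtain ⟨H2, hH2n, hH2p⟩ := pathToCyl g' h' K2 hK2n hK2p
    obtain ⟨F, hF⟩ := W.aux_ext i hillp hX'fib f'
    haveI := hknllp _ hQfib
    have sq : CommSq K1 kn (pullback.lift qn qp hqw)
        (pullback.lift (σ ≫ F) H2 (terminal.hom_ext _ _)) := by
      constructor
      apply pullback.hom_ext
      · simp [coprod.inl_desc, coprod.inr_desc, coprod.inl_desc_assoc, coprod.inr_desc_assoc, pushout.inl_desc, pushout.inr_desc, pushout.inl_desc_assoc, pushout.inr_desc_assoc, pullback.lift_fst, pullback.lift_snd, pullback.lift_fst_assoc, pullback.lift_snd_assoc, hK1n, reassoc_of% hknσ, hF]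
      · simp [coprod.inl_desc, coprod.inr_desc, coprod.inl_desc_assoc, coprod.inr_desc_assoc, pushout.inl_desc, pushout.inr_desc, pushout.inl_desc_assoc, pushout.inr_desc_assoc, pullback.lift_fst, pullback.lift_snd, pullback.lift_fst_assoc, pullback.lift_snd_assoc, hK1p, hH2n]
    have hLn : sq.lift ≫ qn = σ ≫ F := by
      have hh := sq.fac_right =≫ pullback.fst (terminal.from X') (terminal.from X')
      simp only [Category.assoc, pullback.lift_fst] at hh
      exact hh
    have hLp : sq.lift ≫ qp = H2 := by
      have hh := sq.fac_right =≫ pullback.snd (terminal.from X') (terminal.from X')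
      simp only [Category.assoc, pullback.lift_snd] at hh
      exact hh
    have hres := fromRp f' h' (kp ≫ sq.lift)
      (by rw [Category.assoc, hLn, reassoc_of% hkpσ, hF])
      (by rw [Category.assoc, hLp, hH2p])
    rwa [hf', hh'] at hres
end

section
/- In a weak model category, given morphisms f, g: A → X with A cofibrant and X fibrant, the following are equivalent: (a) there exists a cylinder (j⁻, j⁺): A ⊔ A ↪ IA and h: IA → X with f = h j⁻ and g = h j⁺; (b) for every cylinder for A there exists such an h; (c) there exists a path object (p⁻, p⁺): PX ↠ X × X and k: A → PX with f = p⁻ k and g = p⁺ k; (d) for every path object for X there exists such a k. -/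
open CategoryTheory Limits

universe v u

variable (C : Type u) [Category.{v} C] [HasFiniteLimits C] [HasFiniteColimits C]

variable {C}

/-- A path object for a fibrant object `X`: a fibration `(p⁻, p⁺) : P ↠ X × X` whose
first leg is an acyclic fibration, such that the diagonal factors through it up to an
acyclic fibration `t : T ↠ X`. -/
def IsPathObject (W : WeakModelStructure C) (X P : C) (pneg ppos : P ⟶ X) : Prop :=
  W.Fib (prod.lift pneg ppos) ∧
    (W.Fib pneg ∧ ∀ ⦃A' B' : C⦄ (i : A' ⟶ B'), W.Cof i → HasLiftingProperty i pneg) ∧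
    ∃ (T : C) (t : T ⟶ X) (k : T ⟶ P),
      (W.Fib t ∧ ∀ ⦃A' B' : C⦄ (i : A' ⟶ B'), W.Cof i → HasLiftingProperty i t) ∧
      k ≫ pneg = t ∧ k ≫ ppos = t

section Helpers

attribute [local simp] coprod.inl_desc coprod.inr_desc coprod.inl_desc_assoc coprod.inr_desc_assoc
  prod.lift_fst prod.lift_snd prod.lift_fst_assoc prod.lift_snd_assoc
  pushout.inl_desc pushout.inr_desc pushout.inl_desc_assoc pushout.inr_desc_assoc
  pullback.lift_fst pullback.lift_snd pullback.lift_fst_assoc pullback.lift_snd_assoc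
  coprod.inl_map coprod.inr_map coprod.inl_map_assoc coprod.inr_map_assoc
  prod.map_fst prod.map_snd prod.map_fst_assoc prod.map_snd_assoc

variable (W : WeakModelStructure C)

lemma cofCod {A B : C} {i : A ⟶ B} (hi : W.Cof i) (hA : W.Cof (initial.to A)) :
    W.Cof (initial.to B) := by
  rw [show initial.to B = initial.to A ≫ i from initial.hom_ext _ _]
  exact W.cof_comp _ _ hA hi

lemma fibDom {X Y : C} {p : X ⟶ Y} (hp : W.Fib p) (hY : W.Fib (terminal.from Y)) :
    W.Fib (terminal.from X) := by
  rw [show terminal.from X = p ≫ terminal.from Y from terminal.hom_ext _ _]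
  exact W.fib_comp _ _ hp hY

lemma cofInr {A B : C} (hA : W.Cof (initial.to A)) (hB : W.Cof (initial.to B)) :
    W.Cof (coprod.inr : B ⟶ A ⨿ B) := by
  have hpo := W.cof_pushout (initial.to A) (initial.to B) hA hB
  have hPcof : W.Cof (initial.to (pushout (initial.to A) (initial.to B))) :=
    cofCod W hpo hB
  have : (coprod.inr : B ⟶ A ⨿ B) =
      pushout.inr (initial.to A) (initial.to B) ≫ (coprodIsoPushout A B).inv := by
    rw [inr_coprodIsoPushout_inv]
  rw [this]
  exact W.cof_comp _ _ hpo (W.cof_iso _ inferInstance hPcof)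

lemma cofCoprodObj {A B : C} (hA : W.Cof (initial.to A)) (hB : W.Cof (initial.to B)) :
    W.Cof (initial.to (A ⨿ B)) :=
  cofCod W (cofInr W hA hB) hB

lemma cofInl {A B : C} (hA : W.Cof (initial.to A)) (hB : W.Cof (initial.to B)) :
    W.Cof (coprod.inl : A ⟶ A ⨿ B) := by
  have : (coprod.inl : A ⟶ A ⨿ B) =
      (coprod.inr : A ⟶ B ⨿ A) ≫ (coprod.braiding B A).hom := by simp
  rw [this]
  exact W.cof_comp _ _ (cofInr W hB hA)
    (W.cof_iso _ inferInstance (cofCoprodObj W hB hA))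

lemma cofMapIdRight {A D E : C} {d : A ⟶ D} (hd : W.Cof d)
    (hE : W.Cof (initial.to E)) : W.Cof (coprod.map d (𝟙 E)) := by
  have hA : W.Cof (initial.to A) := W.cof_dom d hd
  have hpo := W.cof_pushout d (coprod.inl : A ⟶ A ⨿ E) hd (cofCoprodObj W hA hE)
  -- iso from the pushout to D ⨿ E
  let φ : pushout d (coprod.inl : A ⟶ A ⨿ E) ⟶ D ⨿ E :=
    pushout.desc coprod.inl (coprod.map d (𝟙 E)) (by simp)
  let ψ : D ⨿ E ⟶ pushout d (coprod.inl : A ⟶ A ⨿ E) :=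
    coprod.desc (pushout.inl d coprod.inl)
      ((coprod.inr : E ⟶ A ⨿ E) ≫ pushout.inr d coprod.inl)
  have hφψ : φ ≫ ψ = 𝟙 _ := by
    apply pushout.hom_ext
    · simp [φ, ψ]
    · apply Limits.coprod.hom_ext
      · simp [φ, ψ, ← pushout.condition]
      · simp [φ, ψ]
  have hψφ : ψ ≫ φ = 𝟙 _ := by
    apply Limits.coprod.hom_ext
    · simp [φ, ψ]
    · simp [φ, ψ]
  have hiso : IsIso φ := ⟨ψ, hφψ, hψφ⟩
  have hPcof : W.Cof (initial.to (pushout d (coprod.inl : A ⟶ A ⨿ E))) :=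
    cofCod W hpo (cofCoprodObj W hA hE)
  have : coprod.map d (𝟙 E) = pushout.inr d coprod.inl ≫ φ := by simp [φ]
  rw [this]
  exact W.cof_comp _ _ hpo (W.cof_iso _ hiso hPcof)

lemma cofMapIdLeft {A D E : C} {d : A ⟶ D} (hd : W.Cof d)
    (hE : W.Cof (initial.to E)) : W.Cof (coprod.map (𝟙 E) d) := by
  have hA : W.Cof (initial.to A) := W.cof_dom d hd
  have hD : W.Cof (initial.to D) := cofCod W hd hA
  have : coprod.map (𝟙 E) d =
      (coprod.braiding E A).hom ≫ coprod.map d (𝟙 E) ≫ (coprod.braiding D E).hom := by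
    apply Limits.coprod.hom_ext <;> simp
  rw [this]
  exact W.cof_comp _ _ (W.cof_iso _ inferInstance (cofCoprodObj W hE hA))
    (W.cof_comp _ _ (cofMapIdRight W hd hE)
      (W.cof_iso _ inferInstance (cofCoprodObj W hD hE)))

lemma cofMap {A D A' D' : C} {d : A ⟶ D} {d' : A' ⟶ D'} (hd : W.Cof d)
    (hd' : W.Cof d') : W.Cof (coprod.map d d') := by
  have hA' : W.Cof (initial.to A') := W.cof_dom d' hd'
  have hD : W.Cof (initial.to D) := cofCod W hd (W.cof_dom d hd)
  have : coprod.map d d' = coprod.map d (𝟙 A') ≫ coprod.map (𝟙 D) d' := by simp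
  rw [this]
  exact W.cof_comp _ _ (cofMapIdRight W hd hA') (cofMapIdLeft W hd' hD)

lemma fibFst {Y Z : C} (hY : W.Fib (terminal.from Y)) (hZ : W.Fib (terminal.from Z)) :
    W.Fib (prod.fst : Y ⨯ Z ⟶ Y) := by
  have hpb := W.fib_pullback (terminal.from Z) (terminal.from Y) hZ hY
  have hPfib : W.Fib (terminal.from (pullback (terminal.from Y) (terminal.from Z))) :=
    fibDom W hpb hY
  have : (prod.fst : Y ⨯ Z ⟶ Y) =
      (prodIsoPullback Y Z).hom ≫ pullback.fst (terminal.from Y) (terminal.from Z) := by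
    rw [prodIsoPullback_hom_fst]
  rw [this]
  exact W.fib_comp _ _ (W.fib_iso _ inferInstance hPfib) hpb

lemma fibProdObj {Y Z : C} (hY : W.Fib (terminal.from Y)) (hZ : W.Fib (terminal.from Z)) :
    W.Fib (terminal.from (Y ⨯ Z)) :=
  fibDom W (fibFst W hY hZ) hY

lemma fibSnd {Y Z : C} (hY : W.Fib (terminal.from Y)) (hZ : W.Fib (terminal.from Z)) :
    W.Fib (prod.snd : Y ⨯ Z ⟶ Z) := by
  have : (prod.snd : Y ⨯ Z ⟶ Z) = (prod.braiding Y Z).hom ≫ prod.fst := by simp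
  rw [this]
  exact W.fib_comp _ _ (W.fib_iso _ inferInstance (fibProdObj W hZ hY))
    (fibFst W hZ hY)

lemma fibMapIdRight {T X E : C} {t : T ⟶ X} (ht : W.Fib t)
    (hX : W.Fib (terminal.from X)) (hE : W.Fib (terminal.from E)) :
    W.Fib (prod.map t (𝟙 E)) := by
  have hXE : W.Fib (terminal.from (X ⨯ E)) := fibProdObj W hX hE
  have hpb := W.fib_pullback t (prod.fst : X ⨯ E ⟶ X) ht hXE
  let ψ : T ⨯ E ⟶ pullback (prod.fst : X ⨯ E ⟶ X) t :=
    pullback.lift (prod.map t (𝟙 E)) prod.fst (by simp)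
  let χ : pullback (prod.fst : X ⨯ E ⟶ X) t ⟶ T ⨯ E :=
    prod.lift (pullback.snd _ _) (pullback.fst _ _ ≫ prod.snd)
  have hψχ : ψ ≫ χ = 𝟙 _ := by
    apply Limits.prod.hom_ext
    · simp [ψ, χ]
    · simp [ψ, χ]
  have hχψ : χ ≫ ψ = 𝟙 _ := by
    apply pullback.hom_ext
    · apply Limits.prod.hom_ext
      · simp [ψ, χ, pullback.condition]
      · simp [ψ, χ]
    · simp [ψ, χ]
  have hiso : IsIso ψ := ⟨χ, hψχ, hχψ⟩
  have hPfib : W.Fib (terminal.from (pullback (prod.fst : X ⨯ E ⟶ X) t)) :=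
    fibDom W hpb hXE
  have : prod.map t (𝟙 E) = ψ ≫ pullback.fst (prod.fst : X ⨯ E ⟶ X) t := by
    simp [ψ]
  rw [this]
  exact W.fib_comp _ _ (W.fib_iso _ hiso hPfib) hpb

lemma fibMapIdLeft {T X E : C} {t : T ⟶ X} (ht : W.Fib t)
    (hX : W.Fib (terminal.from X)) (hE : W.Fib (terminal.from E)) :
    W.Fib (prod.map (𝟙 E) t) := by
  have hT : W.Fib (terminal.from T) := fibDom W ht hX
  have : prod.map (𝟙 E) t =
      (prod.braiding E T).hom ≫ prod.map t (𝟙 E) ≫ (prod.braiding X E).hom := by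
    apply Limits.prod.hom_ext <;> simp
  rw [this]
  exact W.fib_comp _ _ (W.fib_iso _ inferInstance (fibProdObj W hT hE))
    (W.fib_comp _ _ (fibMapIdRight W ht hX hE)
      (W.fib_iso _ inferInstance (fibProdObj W hE hX)))

lemma fibMap {T X T' X' : C} {t : T ⟶ X} {t' : T' ⟶ X'} (ht : W.Fib t)
    (ht' : W.Fib t') (hX : W.Fib (terminal.from X)) (hX' : W.Fib (terminal.from X')) :
    W.Fib (prod.map t t') := by
  have hT' : W.Fib (terminal.from T') := fibDom W ht' hX'
  have : prod.map t t' = prod.map t (𝟙 T') ≫ prod.map (𝟙 X) t' := by simp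
  rw [this]
  exact W.fib_comp _ _ (fibMapIdRight W ht hX hT') (fibMapIdLeft W ht' hX' hX)

/-- Every cofibrant object admits a cylinder. -/
lemma existsCylinder {A : C} (hA : W.Cof (initial.to A)) :
    ∃ (I : C) (jneg jpos : A ⟶ I), IsCylinder W A I jneg jpos := by
  obtain ⟨D, d, p, ⟨hdcof, hdllp⟩, hpfib, hdp⟩ :=
    W.fact₂ (terminal.from A) hA W.fib_top
  have hDfib : W.Fib (terminal.from D) := by
    rwa [show terminal.from D = p from terminal.hom_ext _ _]
  have hDcof : W.Cof (initial.to D) := cofCod W hdcof hA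
  obtain ⟨I, lneg, lpos, σ, h0, hdesc, ⟨hlcof, hlllp⟩, hσ1, hσ2⟩ :=
    W.cylinder_axiom (initial.to D) hDcof hDfib
  refine ⟨I, d ≫ lneg, d ≫ lpos, ?_, ?_, D, d, σ, ⟨hdcof, hdllp⟩, ?_, ?_⟩
  · have : coprod.desc (d ≫ lneg) (d ≫ lpos) =
        coprod.map d d ≫ ((coprodIsoPushout D D).hom ≫ pushout.desc lneg lpos h0) := by
      have e1 : coprod.inl ≫ (coprodIsoPushout D D).hom ≫ pushout.desc lneg lpos h0 =
          lneg := by rw [← Category.assoc, inl_coprodIsoPushout_hom, pushout.inl_desc]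
      have e2 : coprod.inr ≫ (coprodIsoPushout D D).hom ≫ pushout.desc lneg lpos h0 =
          lpos := by rw [← Category.assoc, inr_coprodIsoPushout_hom, pushout.inr_desc]
      apply Limits.coprod.hom_ext <;> simp [e1, e2]
    rw [this]
    exact W.cof_comp _ _ (cofMap W hdcof hdcof)
      (W.cof_comp _ _
        (W.cof_iso _ inferInstance (cofCoprodObj W hDcof hDcof)) hdesc)
  · refine ⟨W.cof_comp _ _ hdcof hlcof, fun X' Y' q hq => ?_⟩
    haveI := hdllp q hq
    haveI := hlllp q hq
    infer_instance
  · rw [Category.assoc, hσ1, Category.comp_id]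
  · rw [Category.assoc, hσ2, Category.comp_id]

/-- Every fibrant object admits a path object. -/
lemma existsPathObject {X : C} (hX : W.Fib (terminal.from X)) :
    ∃ (P : C) (pneg ppos : P ⟶ X), IsPathObject W X P pneg ppos := by
  obtain ⟨T, i, t, hicof, ⟨htfib, htrlp⟩, hit⟩ :=
    W.fact₁ (initial.to X) W.cof_bot hX
  have hTcof : W.Cof (initial.to T) := by
    rwa [show initial.to T = i from initial.hom_ext _ _]
  have hTfib : W.Fib (terminal.from T) := fibDom W htfib hX
  obtain ⟨P, qneg, qpos, σ, h0, hlift, ⟨hqfib, hqrlp⟩, hσ1, hσ2⟩ :=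
    W.path_axiom (terminal.from T) hTfib hTcof
  refine ⟨P, qneg ≫ t, qpos ≫ t, ?_, ?_, T, t, σ, ⟨htfib, htrlp⟩, ?_, ?_⟩
  · have : prod.lift (qneg ≫ t) (qpos ≫ t) =
        (pullback.lift qneg qpos h0 ≫ (prodIsoPullback T T).inv) ≫ prod.map t t := by
      apply Limits.prod.hom_ext <;>
        simp [prodIsoPullback_inv_fst, prodIsoPullback_inv_snd]
    rw [this]
    exact W.fib_comp _ _
      (W.fib_comp _ _ hlift
        (W.fib_iso _ inferInstance (fibProdObj W hTfib hTfib)))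
      (fibMap W htfib htfib hX hX)
  · refine ⟨W.fib_comp _ _ hqfib htfib, fun A' B' j hj => ?_⟩
    haveI := hqrlp j hj
    haveI := htrlp j hj
    infer_instance
  · rw [← Category.assoc, hσ1, Category.id_comp]
  · rw [← Category.assoc, hσ2, Category.id_comp]

/-- Homotopy via a cylinder implies homotopy via any path object. -/
lemma cylToPath {A X : C} (hA : W.Cof (initial.to A)) (hX : W.Fib (terminal.from X))
    {f g : A ⟶ X} {I : C} {jneg jpos : A ⟶ I} (hcyl : IsCylinder W A I jneg jpos)
    {h : I ⟶ X} (hf : jneg ≫ h = f) (hg : jpos ≫ h = g)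
    {P : C} {pneg ppos : P ⟶ X} (hpath : IsPathObject W X P pneg ppos) :
    ∃ k : A ⟶ P, k ≫ pneg = f ∧ k ≫ ppos = g := by
  obtain ⟨hdesc, ⟨hjcof, hjllp⟩, D, d, hD, ⟨hdcof, hdllp⟩, hd1, hd2⟩ := hcyl
  obtain ⟨hfib, ⟨hpfib, hprlp⟩, T, t, kT, ⟨htfib, htrlp⟩, hk1, hk2⟩ := hpath
  -- lift f through the acyclic fibration t
  haveI := htrlp (initial.to A) hA
  have sq1 : CommSq (initial.to T) (initial.to A) t f := ⟨initial.hom_ext _ _⟩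
  have hl : sq1.lift ≫ t = f := sq1.fac_right
  set l := sq1.lift with hldef
  -- extend f along the acyclic cofibration d
  haveI := hdllp (terminal.from X) hX
  have sq2 : CommSq f d (terminal.from X) (terminal.from D) := ⟨terminal.hom_ext _ _⟩
  have he : d ≫ sq2.lift = f := sq2.fac_left
  set e := sq2.lift with hedef
  -- main lifting square
  haveI := hjllp (prod.lift pneg ppos) hfib
  have sq3 : CommSq (l ≫ kT) jneg (prod.lift pneg ppos) (prod.lift (hD ≫ e) h) := by
    constructor
    apply Limits.prod.hom_ext
    · simp only [Category.assoc, prod.lift_fst]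
      rw [hk1, hl, ← Category.assoc, hd1, he]
    · simp only [Category.assoc, prod.lift_snd]
      rw [hk2, hl, hf]
  have hH2 : sq3.lift ≫ prod.lift pneg ppos = prod.lift (hD ≫ e) h := sq3.fac_right
  set H := sq3.lift with hHdef
  refine ⟨jpos ≫ H, ?_, ?_⟩
  · have : H ≫ pneg = hD ≫ e := by
      have := hH2 =≫ prod.fst
      simpa using this
    rw [Category.assoc, this, ← Category.assoc, hd2, he]
  · have : H ≫ ppos = h := by
      have := hH2 =≫ prod.snd
      simpa using this
    rw [Category.assoc, this, hg]

/-- Homotopy via a path object implies homotopy via any cylinder. -/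
lemma pathToCyl {A X : C} (hA : W.Cof (initial.to A)) (hX : W.Fib (terminal.from X))
    {f g : A ⟶ X} {P : C} {pneg ppos : P ⟶ X} (hpath : IsPathObject W X P pneg ppos)
    {k : A ⟶ P} (hkf : k ≫ pneg = f) (hkg : k ≫ ppos = g)
    {I : C} {jneg jpos : A ⟶ I} (hcyl : IsCylinder W A I jneg jpos) :
    ∃ h : I ⟶ X, jneg ≫ h = f ∧ jpos ≫ h = g := by
  obtain ⟨hdesc, ⟨hjcof, hjllp⟩, D, d, hD, ⟨hdcof, hdllp⟩, hd1, hd2⟩ := hcyl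
  obtain ⟨hfib, ⟨hpfib, hprlp⟩, T, t, kT, ⟨htfib, htrlp⟩, hk1, hk2⟩ := hpath
  -- lift f through the acyclic fibration t
  haveI := htrlp (initial.to A) hA
  have sq1 : CommSq (initial.to T) (initial.to A) t f := ⟨initial.hom_ext _ _⟩
  have hl : sq1.lift ≫ t = f := sq1.fac_right
  set l := sq1.lift with hldef
  -- extend f along the acyclic cofibration d
  haveI := hdllp (terminal.from X) hX
  have sq2 : CommSq f d (terminal.from X) (terminal.from D) := ⟨terminal.hom_ext _ _⟩
  have he : d ≫ sq2.lift = f := sq2.fac_left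
  set e := sq2.lift with hedef
  -- main lifting square
  haveI := hprlp (coprod.desc jneg jpos) hdesc
  have sq3 : CommSq (coprod.desc (l ≫ kT) k) (coprod.desc jneg jpos) pneg (hD ≫ e) := by
    constructor
    apply Limits.coprod.hom_ext
    · rw [← Category.assoc, coprod.inl_desc, ← Category.assoc, ← Category.assoc,
        coprod.inl_desc, Category.assoc, hk1, hl, hd1, he]
    · rw [← Category.assoc, coprod.inr_desc, ← Category.assoc, ← Category.assoc,
        coprod.inr_desc, hkf, hd2, he]
  have hH1 : coprod.desc jneg jpos ≫ sq3.lift = coprod.desc (l ≫ kT) k := sq3.fac_left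
  set H := sq3.lift with hHdef
  refine ⟨H ≫ ppos, ?_, ?_⟩
  · have : jneg ≫ H = l ≫ kT := by
      have := coprod.inl ≫= hH1
      simpa using this
    rw [← Category.assoc, this, Category.assoc, hk2, hl]
  · have : jpos ≫ H = k := by
      have := coprod.inr ≫= hH1
      simpa using this
    rw [← Category.assoc, this, hkg]

end Helpers

/-- in a weak model category, for `f g : A ⟶ X` with `A` cofibrant and `X`
fibrant, the following are equivalent: (a) `f` and `g` are homotopic via some cylinder;
(b) they are homotopic via every cylinder; (c) they are homotopic via some path object;
(d) they are homotopic via every path object. -/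
theorem stmt7 (W : WeakModelStructure C) {A X : C}
    (hA : W.Cof (initial.to A)) (hX : W.Fib (terminal.from X)) (f g : A ⟶ X) :
    ((∃ (I : C) (jneg jpos : A ⟶ I), IsCylinder W A I jneg jpos ∧
        ∃ h : I ⟶ X, jneg ≫ h = f ∧ jpos ≫ h = g) ↔
      (∀ (I : C) (jneg jpos : A ⟶ I), IsCylinder W A I jneg jpos →
        ∃ h : I ⟶ X, jneg ≫ h = f ∧ jpos ≫ h = g)) ∧
    ((∃ (I : C) (jneg jpos : A ⟶ I), IsCylinder W A I jneg jpos ∧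
        ∃ h : I ⟶ X, jneg ≫ h = f ∧ jpos ≫ h = g) ↔
      (∃ (P : C) (pneg ppos : P ⟶ X), IsPathObject W X P pneg ppos ∧
        ∃ k : A ⟶ P, k ≫ pneg = f ∧ k ≫ ppos = g)) ∧
    ((∃ (P : C) (pneg ppos : P ⟶ X), IsPathObject W X P pneg ppos ∧
        ∃ k : A ⟶ P, k ≫ pneg = f ∧ k ≫ ppos = g) ↔
      (∀ (P : C) (pneg ppos : P ⟶ X), IsPathObject W X P pneg ppos →
        ∃ k : A ⟶ P, k ≫ pneg = f ∧ k ≫ ppos = g)) := by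
  -- (a) → (c)
  have hac : (∃ (I : C) (jneg jpos : A ⟶ I), IsCylinder W A I jneg jpos ∧
        ∃ h : I ⟶ X, jneg ≫ h = f ∧ jpos ≫ h = g) →
      (∃ (P : C) (pneg ppos : P ⟶ X), IsPathObject W X P pneg ppos ∧
        ∃ k : A ⟶ P, k ≫ pneg = f ∧ k ≫ ppos = g) := by
    rintro ⟨I, jneg, jpos, hcyl, h, hf, hg⟩
    obtain ⟨P, pneg, ppos, hpath⟩ := existsPathObject W hX
    exact ⟨P, pneg, ppos, hpath, cylToPath W hA hX hcyl hf hg hpath⟩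
  -- (c) → (a)
  have hca : (∃ (P : C) (pneg ppos : P ⟶ X), IsPathObject W X P pneg ppos ∧
        ∃ k : A ⟶ P, k ≫ pneg = f ∧ k ≫ ppos = g) →
      (∃ (I : C) (jneg jpos : A ⟶ I), IsCylinder W A I jneg jpos ∧
        ∃ h : I ⟶ X, jneg ≫ h = f ∧ jpos ≫ h = g) := by
    rintro ⟨P, pneg, ppos, hpath, k, hkf, hkg⟩
    obtain ⟨I, jneg, jpos, hcyl⟩ := existsCylinder W hA
    exact ⟨I, jneg, jpos, hcyl, pathToCyl W hA hX hpath hkf hkg hcyl⟩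
  refine ⟨⟨?_, ?_⟩, ⟨hac, hca⟩, ⟨?_, ?_⟩⟩
  · rintro hex I jneg jpos hcyl
    obtain ⟨P, pneg, ppos, hpath, k, hkf, hkg⟩ := hac hex
    exact pathToCyl W hA hX hpath hkf hkg hcyl
  · intro hall
    obtain ⟨I, jneg, jpos, hcyl⟩ := existsCylinder W hA
    exact ⟨I, jneg, jpos, hcyl, hall I jneg jpos hcyl⟩
  · rintro hex P pneg ppos hpath
    obtain ⟨I, jneg, jpos, hcyl, h, hf, hg⟩ := hca hex
    exact cylToPath W hA hX hcyl hf hg hpath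
  · intro hall
    obtain ⟨P, pneg, ppos, hpath⟩ := existsPathObject W hX
    exact ⟨P, pneg, ppos, hpath, hall P pneg ppos hpath⟩
end
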